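/- If an element u of ℤ[C_n] satisfies u·(1 - t^{-1}) generates the same ideal as (1 - t^{-1}) and Σ·u = Σ, then u is a unit in ℤ[C_n]. -/

import Mathlib

set_option maxHeartbeats 1000000


/-- If an element `u` of `ℤ[C_n] ≅ ℤ[t]/(t^n-1)` (with `n ≥ 2`) is such that
`u·(1 - t⁻¹)` generates the same ideal as `1 - t⁻¹` (where `t⁻¹ = t^{n-1}`),
and `Σ·u = Σ` for `Σ = ∑_{i=0}^{n-1} t^i`, then `u` is a unit. -/
theorem stmt_6 (n : ℕ) (hn : 2 ≤ n)
    (t : Polynomial ℤ ⧸ Ideal.span {Polynomial.X ^ n - 1})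
    (ht : t = Ideal.Quotient.mk _ Polynomial.X)
    (u : Polynomial ℤ ⧸ Ideal.span {Polynomial.X ^ n - 1})
    (h1 : Ideal.span {u * (1 - t ^ (n - 1))} = Ideal.span {1 - t ^ (n - 1)})
    (h2 : (∑ i ∈ Finset.range n, t ^ i) * u = ∑ i ∈ Finset.range n, t ^ i) :
    IsUnit u := by
  have hnn : n - 1 + 1 = n := by omega
  have htn : t ^ n = 1 := by
    rw [ht, ← map_pow, ← map_one (Ideal.Quotient.mk (Ideal.span {Polynomial.X ^ n - 1})),
      Ideal.Quotient.mk_eq_mk_iff_sub_mem]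
    exact Ideal.mem_span_singleton_self _
  have hm : 1 - t ^ (n - 1) ∈ Ideal.span {u * (1 - t ^ (n - 1))} := by
    rw [h1]; exact Ideal.mem_span_singleton_self _
  obtain ⟨γ, hγ⟩ := Ideal.mem_span_singleton'.mp hm
  have h3 : (γ * u - 1) * (1 - t ^ (n - 1)) = 0 := by
    rw [sub_mul, one_mul, mul_assoc, hγ, sub_self]
  have he : (γ * u - 1) * (t - 1) = 0 := by
    have hone : (1 - t ^ (n - 1)) * t = t - 1 := by
      rw [sub_mul, one_mul, ← pow_succ, hnn, htn]
    calc (γ * u - 1) * (t - 1) = (γ * u - 1) * (1 - t ^ (n - 1)) * t := by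
          rw [mul_assoc, hone]
      _ = 0 := by rw [h3, zero_mul]
  obtain ⟨p, hp⟩ := Ideal.Quotient.mk_surjective (γ * u - 1)
  have hmem : p * (Polynomial.X - 1) ∈ Ideal.span {(Polynomial.X : Polynomial ℤ) ^ n - 1} := by
    rw [← Ideal.Quotient.eq_zero_iff_mem, map_mul, hp, map_sub, map_one, ← ht, he]
  obtain ⟨q, hq⟩ := Ideal.mem_span_singleton'.mp hmem
  have hgeo : (∑ i ∈ Finset.range n, (Polynomial.X : Polynomial ℤ) ^ i) * (Polynomial.X - 1)
      = Polynomial.X ^ n - 1 := geom_sum_mul _ n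
  have hne : (Polynomial.X - 1 : Polynomial ℤ) ≠ 0 := by
    simpa using Polynomial.X_sub_C_ne_zero (1 : ℤ)
  have hp' : p = q * ∑ i ∈ Finset.range n, Polynomial.X ^ i := by
    apply mul_right_cancel₀ hne
    rw [← hq, ← hgeo]; ring
  have heS : γ * u - 1 = Ideal.Quotient.mk _ q * ∑ i ∈ Finset.range n, t ^ i := by
    rw [← hp, hp', map_mul, map_sum]
    simp [ht, map_pow]
  refine IsUnit.of_mul_eq_one (a := u) (γ - Ideal.Quotient.mk _ q * ∑ i ∈ Finset.range n, t ^ i) ?_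
  have hγu : γ * u = 1 + Ideal.Quotient.mk _ q * ∑ i ∈ Finset.range n, t ^ i := by
    rw [← heS]; ring
  calc u * (γ - Ideal.Quotient.mk _ q * ∑ i ∈ Finset.range n, t ^ i)
      = γ * u - Ideal.Quotient.mk _ q * ((∑ i ∈ Finset.range n, t ^ i) * u) := by ring
    _ = 1 := by rw [h2, hγu]; ring
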